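/- If (a,b,c) is a q-Markov triple, then so is (a,b,c′), where c′ = q^{-1}(q² + q + 1)·a·b − c; in particular (a,b,c′) again satisfies the q-Markov equation and the evaluation c′(1) is a positive integer. -/
import Mathlib


open LaurentPolynomial

namespace QMarkovPaper

/-- Evaluation at `q = 1`: the ring homomorphism `ℤ[q^{±1}] → ℤ` sending `q = T 1` to `1`. -/
noncomputable def ev1 : LaurentPolynomial ℤ →+* ℤ :=
  AddMonoidAlgebra.liftNCRingHom (RingHom.id ℤ) 1 (fun _ _ => Commute.all _ _)

/-- The `q`-Markov equation
`a² + b² + c² = q⁻¹(q² + q + 1)·a·b·c + (q − 1)(q⁻¹ − 1)` in `ℤ[q^{±1}]`. -/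
def qMarkovEq (a b c : LaurentPolynomial ℤ) : Prop :=
  a ^ 2 + b ^ 2 + c ^ 2 =
    T (-1) * (T 2 + T 1 + 1) * (a * b * c) + (T 1 - 1) * (T (-1) - 1)

/-- A `q`-Markov triple: a solution of the `q`-Markov equation whose evaluations
at `q = 1` are positive integers. -/
def qMarkovTriple (a b c : LaurentPolynomial ℤ) : Prop :=
  qMarkovEq a b c ∧ 0 < ev1 a ∧ 0 < ev1 b ∧ 0 < ev1 c

/-- The `q`-integer `[n]_q = (qⁿ − 1)/(q − 1) ∈ ℤ[q^{±1}]`, for `n : ℤ`. -/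
noncomputable def qint : ℤ → LaurentPolynomial ℤ
  | Int.ofNat n => ∑ i ∈ Finset.range n, T (i : ℤ)
  | Int.negSucc n => -∑ i ∈ Finset.range (n + 1), T (-(i + 1) : ℤ)

/-- The `q`-deformed Cohn matrix `A(n)_q`. -/
noncomputable def Aq (n : ℤ) : Matrix (Fin 2) (Fin 2) (LaurentPolynomial ℤ) :=
  !![T (2 - n) * qint n, T (1 - n);
     qint n * qint (3 - n) - T (n - 1), T (-1) * qint (3 - n)]

/-- The `q`-deformed Cohn matrix `B(n)_q = A(n)_q · A(n+1)_q`. -/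
noncomputable def Bq (n : ℤ) : Matrix (Fin 2) (Fin 2) (LaurentPolynomial ℤ) :=
  Aq n * Aq (n + 1)

/-- The pair of `q`-deformed Cohn matrices attached to a vertex of the binary tree,
encoded as a word over `{0,1}` (here `false = 0`, `true = 1`):
`P n [] = (A(n)_q, B(n)_q)`; if `P n u = (M, N)` then `P n (u·0) = (M, M·N)` and
`P n (u·1) = (M·N, N)`. -/
noncomputable def P (n : ℤ) (u : List Bool) :
    Matrix (Fin 2) (Fin 2) (LaurentPolynomial ℤ) ×
      Matrix (Fin 2) (Fin 2) (LaurentPolynomial ℤ) :=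
  u.foldl (fun p b => if b then (p.1 * p.2, p.2) else (p.1, p.1 * p.2)) (Aq n, Bq n)



lemma ev1_T (n : ℤ) : ev1 (T n) = 1 := by
  show AddMonoidAlgebra.liftNC _ _ (AddMonoidAlgebra.single n 1) = 1
  rw [AddMonoidAlgebra.liftNC_single]
  simp

/-- Mutating the third entry of a `q`-Markov triple again yields a
`q`-Markov triple (in particular it satisfies the `q`-Markov equation and the mutated
entry evaluates to a positive integer at `q = 1`). -/
theorem qMarkovTriple_mutate (a b c : LaurentPolynomial ℤ) (h : qMarkovTriple a b c) :
    qMarkovTriple a b (T (-1) * (T 2 + T 1 + 1) * (a * b) - c) := by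
  obtain ⟨heq, ha, hb, hc⟩ := h
  refine ⟨?_, ha, hb, ?_⟩
  · unfold qMarkovEq at heq ⊢
    linear_combination heq
  · have h1 : ev1 (a ^ 2 + b ^ 2 + c ^ 2) =
        ev1 (T (-1) * (T 2 + T 1 + 1) * (a * b * c) + (T 1 - 1) * (T (-1) - 1)) := by
      rw [heq]
    simp only [map_add, map_mul, map_pow, map_sub, map_one, ev1_T] at h1 ⊢
    nlinarith [sq_nonneg (ev1 a), sq_nonneg (ev1 b), hc, ha, hb]

end QMarkovPaper
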